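/- Let p_β be the marginal density of β where β|ψ ~ N(0,ψ) and ψ ~ Gamma(λ, 1/(2γ²)) with 0 < λ ≤ 1/2. Then p_β(β) → ∞ as β → 0, i.e., the Normal-Gamma prior with shape λ ≤ 1/2 is unbounded at the origin. -/

import Mathlib

open MeasureTheory Real Filter

lemma ng_integrable (lam γ β : ℝ) (hlam0 : 0 < lam) (hγ : 0 < γ) (hβ : β ≠ 0) :
    IntegrableOn (fun ψ : ℝ =>
        (2 * π * ψ) ^ (-(1 : ℝ) / 2) * exp (-β ^ 2 / (2 * ψ)) *
          ((1 / (2 * γ ^ 2)) ^ lam / Gamma lam * ψ ^ (lam - 1) * exp (-ψ / (2 * γ ^ 2))))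
      (Set.Ioi (0 : ℝ)) := by
  have hb : (0:ℝ) < 1 / (2 * γ ^ 2) := by positivity
  have hβ2 : 0 < β ^ 2 := by positivity
  have hπ2 : (0:ℝ) < 2 * π := by positivity
  set K : ℝ := (1 / (2 * γ ^ 2)) ^ lam / Gamma lam with hKdef
  have hK : 0 < K := div_pos (rpow_pos_of_pos hb _) (Gamma_pos_of_pos hlam0)
  set C : ℝ := (2 * π) ^ (-(1:ℝ)/2) * K * (2 / β ^ 2) with hCdef
  have base : IntegrableOn (fun x : ℝ => x ^ (lam - 1/2) * exp (-(1/(2*γ^2)) * x))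
      (Set.Ioi (0:ℝ)) := by
    have := integrableOn_rpow_mul_exp_neg_mul_rpow (s := lam - 1/2) (p := 1)
      (b := 1/(2*γ^2)) (by linarith) one_pos hb
    simpa [Real.rpow_one] using this
  refine ((base.const_mul C).mono' ?_ ?_)
  · apply ContinuousOn.aestronglyMeasurable ?_ measurableSet_Ioi
    apply ContinuousOn.mul
    apply ContinuousOn.mul
    · apply ContinuousOn.rpow_const (by fun_prop)
      intro x hx
      have hx0 : (0:ℝ) < x := hx
      exact Or.inl (by positivity : (0:ℝ) < 2 * π * x).ne'
    · apply ContinuousOn.rexp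
      apply ContinuousOn.div continuousOn_const (by fun_prop)
      intro x hx
      have hx0 : (0:ℝ) < x := hx
      positivity
    · apply ContinuousOn.mul (ContinuousOn.mul continuousOn_const ?_) (by fun_prop)
      apply ContinuousOn.rpow_const continuousOn_id
      intro x hx
      exact Or.inl (ne_of_gt hx)
  · filter_upwards [self_mem_ae_restrict measurableSet_Ioi] with ψ hψ
    have hψ0 : (0:ℝ) < ψ := hψ
    have hnn : 0 ≤ (2 * π * ψ) ^ (-(1 : ℝ) / 2) * exp (-β ^ 2 / (2 * ψ)) *
        (K * ψ ^ (lam - 1) * exp (-ψ / (2 * γ ^ 2))) := by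
      have := hK.le
      positivity
    rw [Real.norm_eq_abs, abs_of_nonneg hnn]
    have hE : exp (-β ^ 2 / (2 * ψ)) ≤ 2 * ψ / β ^ 2 := by
      have hx : 0 < β ^ 2 / (2 * ψ) := by positivity
      have hxe : β ^ 2 / (2 * ψ) ≤ exp (β ^ 2 / (2 * ψ)) := by
        linarith [Real.add_one_le_exp (β ^ 2 / (2 * ψ))]
      calc exp (-β ^ 2 / (2 * ψ)) = (exp (β ^ 2 / (2 * ψ)))⁻¹ := by
            rw [neg_div, Real.exp_neg]
        _ ≤ (β ^ 2 / (2 * ψ))⁻¹ := inv_anti₀ hx hxe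
        _ = 2 * ψ / β ^ 2 := by rw [inv_div]
    have hsplit : (2 * π * ψ) ^ (-(1 : ℝ) / 2)
        = (2 * π) ^ (-(1:ℝ)/2) * ψ ^ (-(1:ℝ)/2) := mul_rpow hπ2.le hψ0.le
    have hpow : ψ ^ (-(1:ℝ)/2) * ψ ^ (lam - 1) * ψ = ψ ^ (lam - 1/2) := by
      rw [← Real.rpow_add hψ0, ← Real.rpow_add_one hψ0.ne']
      congr 1
      ring
    have hexparg : -ψ / (2 * γ ^ 2) = -(1/(2*γ^2)) * ψ := by ring
    calc (2 * π * ψ) ^ (-(1 : ℝ) / 2) * exp (-β ^ 2 / (2 * ψ)) *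
          (K * ψ ^ (lam - 1) * exp (-ψ / (2 * γ ^ 2)))
        = (2 * π) ^ (-(1:ℝ)/2) * K * (ψ ^ (-(1:ℝ)/2) * ψ ^ (lam - 1)) *
            exp (-ψ / (2 * γ ^ 2)) * exp (-β ^ 2 / (2 * ψ)) := by
          rw [hsplit]; ring
      _ ≤ (2 * π) ^ (-(1:ℝ)/2) * K * (ψ ^ (-(1:ℝ)/2) * ψ ^ (lam - 1)) *
            exp (-ψ / (2 * γ ^ 2)) * (2 * ψ / β ^ 2) := by
          apply mul_le_mul_of_nonneg_left hE
          have := hK.le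
          positivity
      _ = C * (ψ ^ (lam - 1/2) * exp (-(1/(2*γ^2)) * ψ)) := by
          rw [hCdef, ← hexparg, ← hpow]; ring

/-- The Normal-Gamma marginal density with shape 0 < λ ≤ 1/2 is unbounded at the origin:
p_β(β) → ∞ as β → 0 (β ≠ 0). -/
theorem normalGamma_density_unbounded_at_origin (lam γ : ℝ)
    (hlam0 : 0 < lam) (hlam : lam ≤ 1 / 2) (hγ : 0 < γ) :
    Tendsto (fun β : ℝ =>
        ∫ ψ in Set.Ioi (0 : ℝ),
          (2 * π * ψ) ^ (-(1 : ℝ) / 2) * exp (-β ^ 2 / (2 * ψ)) *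
            ((1 / (2 * γ ^ 2)) ^ lam / Gamma lam * ψ ^ (lam - 1) * exp (-ψ / (2 * γ ^ 2))))
      (nhdsWithin 0 {0}ᶜ) atTop := by
  rw [tendsto_atTop]
  intro Cb
  have hb : (0:ℝ) < 1 / (2 * γ ^ 2) := by positivity
  have hπ2 : (0:ℝ) < 2 * π := by positivity
  set K : ℝ := (1 / (2 * γ ^ 2)) ^ lam / Gamma lam with hKdef
  have hK : 0 < K := div_pos (rpow_pos_of_pos hb _) (Gamma_pos_of_pos hlam0)
  set c : ℝ := (2 * π) ^ (-(1:ℝ)/2) * K * exp (-(1 / (2 * γ ^ 2))) / 2 with hcdef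
  have hc : 0 < c := by
    have h1 : (0:ℝ) < (2 * π) ^ (-(1:ℝ)/2) := rpow_pos_of_pos hπ2 _
    have h2 : (0:ℝ) < exp (-(1 / (2 * γ ^ 2))) := exp_pos _
    rw [hcdef]
    exact div_pos (mul_pos (mul_pos h1 hK) h2) two_pos
  set ε : ℝ := exp (-(|Cb| / c + 1)) with hεdef
  have hε0 : 0 < ε := exp_pos _
  have hε1 : ε < 1 := by
    rw [hεdef, exp_lt_one_iff]
    have : 0 ≤ |Cb| / c := div_nonneg (abs_nonneg _) hc.le
    linarith
  have hlog2 : (0:ℝ) < Real.log 2 := Real.log_pos one_lt_two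
  set δ : ℝ := Real.sqrt (2 * ε * Real.log 2) with hδdef
  have hδ : 0 < δ := Real.sqrt_pos.mpr (by positivity)
  filter_upwards [mem_nhdsWithin_of_mem_nhds (Metric.ball_mem_nhds (0:ℝ) hδ),
    self_mem_nhdsWithin] with β hβδ hβ0
  replace hβδ : |β| < δ := by simpa [Real.dist_eq] using hβδ
  replace hβ0 : β ≠ 0 := hβ0
  have hβsq : β ^ 2 < 2 * ε * Real.log 2 := by
    have h1 : β ^ 2 = |β| ^ 2 := (sq_abs β).symm
    have h2 : |β| ^ 2 < δ ^ 2 := by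
      apply pow_lt_pow_left₀ hβδ (abs_nonneg β)
      norm_num
    have h3 : δ ^ 2 = 2 * ε * Real.log 2 := Real.sq_sqrt (by positivity)
    linarith
  -- pointwise lower bound on Ioc ε 1
  have key : ∀ ψ ∈ Set.Ioc ε (1:ℝ), c * ψ⁻¹ ≤
      (2 * π * ψ) ^ (-(1 : ℝ) / 2) * exp (-β ^ 2 / (2 * ψ)) *
        (K * ψ ^ (lam - 1) * exp (-ψ / (2 * γ ^ 2))) := by
    intro ψ hψ
    obtain ⟨hψε, hψ1⟩ := hψ
    have hψ0 : 0 < ψ := hε0.trans hψε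
    have hsplit : (2 * π * ψ) ^ (-(1 : ℝ) / 2)
        = (2 * π) ^ (-(1:ℝ)/2) * ψ ^ (-(1:ℝ)/2) := mul_rpow hπ2.le hψ0.le
    have hE : (1:ℝ)/2 ≤ exp (-β ^ 2 / (2 * ψ)) := by
      have h1 : β ^ 2 / (2 * ψ) ≤ Real.log 2 := by
        rw [div_le_iff₀ (by positivity)]
        nlinarith
      calc (1:ℝ)/2 = exp (-Real.log 2) := by
            rw [Real.exp_neg, Real.exp_log two_pos]; norm_num
        _ ≤ exp (-β ^ 2 / (2 * ψ)) := by
            apply Real.exp_le_exp.mpr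
            rw [neg_div]
            exact neg_le_neg h1
    have hX : exp (-(1 / (2 * γ ^ 2))) ≤ exp (-ψ / (2 * γ ^ 2)) := by
      apply Real.exp_le_exp.mpr
      rw [neg_div]
      apply neg_le_neg
      exact (div_le_div_iff_of_pos_right (by positivity)).mpr hψ1
    have hP : ψ⁻¹ ≤ ψ ^ (-(1:ℝ)/2) * ψ ^ (lam - 1) := by
      rw [← Real.rpow_add hψ0, ← Real.rpow_neg_one ψ]
      apply Real.rpow_le_rpow_of_exponent_ge hψ0 hψ1
      linarith
    have h1 : K * ψ⁻¹ ≤ K * (ψ ^ (-(1:ℝ)/2) * ψ ^ (lam - 1)) :=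
      mul_le_mul_of_nonneg_left hP hK.le
    have h2 : (1:ℝ)/2 * exp (-(1 / (2 * γ ^ 2))) ≤
        exp (-β ^ 2 / (2 * ψ)) * exp (-ψ / (2 * γ ^ 2)) :=
      mul_le_mul hE hX (exp_pos _).le (exp_pos _).le
    calc c * ψ⁻¹
        = (2 * π) ^ (-(1:ℝ)/2) * (K * ψ⁻¹) * ((1:ℝ)/2 * exp (-(1 / (2 * γ ^ 2)))) := by
          rw [hcdef]; ring
      _ ≤ (2 * π) ^ (-(1:ℝ)/2) * (K * (ψ ^ (-(1:ℝ)/2) * ψ ^ (lam - 1))) *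
            (exp (-β ^ 2 / (2 * ψ)) * exp (-ψ / (2 * γ ^ 2))) := by
          apply mul_le_mul (mul_le_mul_of_nonneg_left h1 (rpow_pos_of_pos hπ2 _).le) h2
          · positivity
          · have hP0 : (0:ℝ) ≤ ψ ^ (-(1:ℝ)/2) * ψ ^ (lam - 1) := by positivity
            have := hK.le
            positivity
      _ = (2 * π * ψ) ^ (-(1 : ℝ) / 2) * exp (-β ^ 2 / (2 * ψ)) *
            (K * ψ ^ (lam - 1) * exp (-ψ / (2 * γ ^ 2))) := by
          rw [hsplit]; ring
  -- integrability facts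
  have hIg : IntegrableOn (fun ψ : ℝ =>
      (2 * π * ψ) ^ (-(1 : ℝ) / 2) * exp (-β ^ 2 / (2 * ψ)) *
        (K * ψ ^ (lam - 1) * exp (-ψ / (2 * γ ^ 2)))) (Set.Ioi (0:ℝ)) :=
    ng_integrable lam γ β hlam0 hγ hβ0
  have hsub : Set.Ioc ε (1:ℝ) ⊆ Set.Ioi (0:ℝ) := fun x hx => hε0.trans hx.1
  have hIc : IntegrableOn (fun ψ : ℝ => c * ψ⁻¹) (Set.Ioc ε (1:ℝ)) := by
    have huIcc : Set.uIcc ε (1:ℝ) = Set.Icc ε 1 := Set.uIcc_of_le hε1.le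
    have : IntervalIntegrable (fun x : ℝ => x⁻¹) volume ε 1 := by
      apply intervalIntegral.intervalIntegrable_inv
      · intro x hx
        rw [huIcc] at hx
        exact (hε0.trans_le hx.1).ne'
      · exact continuousOn_id
    exact (this.1).const_mul c
  have hgnn : 0 ≤ᵐ[volume.restrict (Set.Ioi (0:ℝ))] fun ψ : ℝ =>
      (2 * π * ψ) ^ (-(1 : ℝ) / 2) * exp (-β ^ 2 / (2 * ψ)) *
        (K * ψ ^ (lam - 1) * exp (-ψ / (2 * γ ^ 2))) := by
    filter_upwards [self_mem_ae_restrict measurableSet_Ioi] with ψ hψ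
    have hψ0 : (0:ℝ) < ψ := hψ
    have := hK.le
    positivity
  have hval : ∫ ψ in Set.Ioc ε (1:ℝ), c * ψ⁻¹ = c * (|Cb| / c + 1) := by
    rw [MeasureTheory.integral_const_mul]
    rw [← intervalIntegral.integral_of_le hε1.le]
    rw [integral_inv_of_pos hε0 one_pos]
    rw [hεdef]
    rw [one_div, Real.log_inv, Real.log_exp]
    ring
  calc Cb ≤ c * (|Cb| / c + 1) := by
        have : c * (|Cb| / c + 1) = |Cb| + c := by field_simp
        rw [this]
        linarith [le_abs_self Cb]
    _ = ∫ ψ in Set.Ioc ε (1:ℝ), c * ψ⁻¹ := hval.symm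
    _ ≤ ∫ ψ in Set.Ioc ε (1:ℝ),
          (2 * π * ψ) ^ (-(1 : ℝ) / 2) * exp (-β ^ 2 / (2 * ψ)) *
            (K * ψ ^ (lam - 1) * exp (-ψ / (2 * γ ^ 2))) :=
        setIntegral_mono_on hIc (hIg.mono_set hsub) measurableSet_Ioc key
    _ ≤ ∫ ψ in Set.Ioi (0:ℝ),
          (2 * π * ψ) ^ (-(1 : ℝ) / 2) * exp (-β ^ 2 / (2 * ψ)) *
            (K * ψ ^ (lam - 1) * exp (-ψ / (2 * γ ^ 2))) :=
        setIntegral_mono_set hIg hgnn (HasSubset.Subset.eventuallyLE hsub)
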